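/- Let G be a GP4-graph constructed from a connected graph H with n vertices. The set S = {w_i, y_i : 1 ≤ i ≤ n} is a semipaired dominating set of G of size 2n; hence γ_{pr2}(G) ≤ (2/5)|V(G)|. -/
import Mathlib


open SimpleGraph Finset

/-- `D` is a dominating set of `G`. -/
def Dominating {V : Type*} (G : SimpleGraph V) (D : Finset V) : Prop :=
  ∀ v : V, ∃ u ∈ D, u = v ∨ G.Adj u v

/-- `D` is a semipaired dominating set of `G`: a dominating set whose vertices can be
partitioned into pairs (via a fixed-point-free involution) at distance at most 2. -/
def SemiPairedDom {V : Type*} (G : SimpleGraph V) (D : Finset V) : Prop :=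
  Dominating G D ∧ ∃ f : V → V,
    (∀ u ∈ D, f u ∈ D) ∧ (∀ u ∈ D, f (f u) = u) ∧ (∀ u ∈ D, f u ≠ u) ∧
    (∀ u ∈ D, G.Adj u (f u) ∨ ∃ w, G.Adj u w ∧ G.Adj w (f u))

/-- `D` is a paired dominating set of `G`: a dominating set whose induced subgraph has a
perfect matching (encoded by a fixed-point-free involution pairing adjacent vertices). -/
def PairedDom {V : Type*} (G : SimpleGraph V) (D : Finset V) : Prop :=
  Dominating G D ∧ ∃ f : V → V,
    (∀ u ∈ D, f u ∈ D) ∧ (∀ u ∈ D, f (f u) = u) ∧ (∀ u ∈ D, f u ≠ u) ∧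
    (∀ u ∈ D, G.Adj u (f u))

/-- The domination number. -/
noncomputable def domNum (V : Type*) [Fintype V] (G : SimpleGraph V) : ℕ :=
  sInf {k : ℕ | ∃ D : Finset V, Dominating G D ∧ D.card = k}

/-- The semipaired domination number. -/
noncomputable def semiPairedDomNum (V : Type*) [Fintype V] (G : SimpleGraph V) : ℕ :=
  sInf {k : ℕ | ∃ D : Finset V, SemiPairedDom G D ∧ D.card = k}

/-- The paired domination number. -/
noncomputable def pairedDomNum (V : Type*) [Fintype V] (G : SimpleGraph V) : ℕ :=
  sInf {k : ℕ | ∃ D : Finset V, PairedDom G D ∧ D.card = k}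

/-- The GP4-graph obtained from `H` by attaching to each vertex `a` a path
`a – w_a – x_a – y_a – z_a`, where `w_a, x_a, y_a, z_a` are the vertices
`Sum.inr (a, 0), …, Sum.inr (a, 3)`. -/
def GP4 {α : Type*} (H : SimpleGraph α) : SimpleGraph (α ⊕ α × Fin 4) :=
  SimpleGraph.fromRel (fun u v =>
    (∃ a b, u = Sum.inl a ∧ v = Sum.inl b ∧ H.Adj a b) ∨
    (∃ a, u = Sum.inl a ∧ v = Sum.inr (a, 0)) ∨
    (∃ (a : α) (j k : Fin 4), u = Sum.inr (a, j) ∧ v = Sum.inr (a, k) ∧ (k : ℕ) = (j : ℕ) + 1))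

/-- The set `S = {w_i, y_i}` is a semipaired dominating set of the GP4-graph
of size `2n`; hence `γ_{pr2}(G) ≤ (2/5)|V(G)| = 2n`. -/
theorem gp4_semiPairedDomNum_le {α : Type*} [Fintype α] [DecidableEq α]
    (H : SimpleGraph α) (hH : H.Connected) :
    SemiPairedDom (GP4 H)
      ((Finset.univ.image fun a : α => (Sum.inr (a, 0) : α ⊕ α × Fin 4)) ∪
        (Finset.univ.image fun a : α => (Sum.inr (a, 2) : α ⊕ α × Fin 4))) ∧
    ((Finset.univ.image fun a : α => (Sum.inr (a, 0) : α ⊕ α × Fin 4)) ∪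
        (Finset.univ.image fun a : α => (Sum.inr (a, 2) : α ⊕ α × Fin 4))).card
      = 2 * Fintype.card α ∧
    semiPairedDomNum (α ⊕ α × Fin 4) (GP4 H) ≤ 2 * Fintype.card α := by
  set S : Finset (α ⊕ α × Fin 4) :=
    ((Finset.univ.image fun a : α => (Sum.inr (a, 0) : α ⊕ α × Fin 4)) ∪
      (Finset.univ.image fun a : α => (Sum.inr (a, 2) : α ⊕ α × Fin 4))) with hS
  have hmem : ∀ v, v ∈ S ↔ (∃ a, v = Sum.inr (a, 0)) ∨ ∃ a, v = Sum.inr (a, 2) := by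
    intro v
    simp [hS, Finset.mem_union, Finset.mem_image, eq_comm]
  have hadjP : ∀ (a : α) (j k : Fin 4), (k : ℕ) = (j : ℕ) + 1 →
      (GP4 H).Adj (Sum.inr (a, j)) (Sum.inr (a, k)) := by
    intro a j k hjk
    refine ⟨?_, Or.inl (Or.inr (Or.inr ⟨a, j, k, rfl, rfl, hjk⟩))⟩
    intro h
    have : j = k := by simpa using h
    omega
  have hadjW : ∀ a : α, (GP4 H).Adj (Sum.inl a) (Sum.inr (a, 0)) := by
    intro a
    exact ⟨by simp, Or.inl (Or.inr (Or.inl ⟨a, rfl, rfl⟩))⟩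
  have hdom : Dominating (GP4 H) S := by
    intro v
    rcases v with a | ⟨a, j⟩
    · exact ⟨Sum.inr (a, 0), (hmem _).2 (Or.inl ⟨a, rfl⟩), Or.inr (hadjW a).symm⟩
    · fin_cases j
      · exact ⟨Sum.inr (a, 0), (hmem _).2 (Or.inl ⟨a, rfl⟩), Or.inl rfl⟩
      · exact ⟨Sum.inr (a, 0), (hmem _).2 (Or.inl ⟨a, rfl⟩), Or.inr (hadjP a 0 1 rfl)⟩
      · exact ⟨Sum.inr (a, 2), (hmem _).2 (Or.inr ⟨a, rfl⟩), Or.inl rfl⟩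
      · exact ⟨Sum.inr (a, 2), (hmem _).2 (Or.inr ⟨a, rfl⟩), Or.inr (hadjP a 2 3 rfl)⟩
  have hsemi : SemiPairedDom (GP4 H) S := by
    refine ⟨hdom, fun v => match v with
      | Sum.inl a => Sum.inl a
      | Sum.inr (a, j) => Sum.inr (a, if j = 0 then 2 else if j = 2 then 0 else j),
      ?_, ?_, ?_, ?_⟩
    · intro u hu
      rcases (hmem u).1 hu with ⟨a, rfl⟩ | ⟨a, rfl⟩
      · exact (hmem _).2 (Or.inr ⟨a, rfl⟩)
      · exact (hmem _).2 (Or.inl ⟨a, rfl⟩)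
    · intro u hu
      rcases (hmem u).1 hu with ⟨a, rfl⟩ | ⟨a, rfl⟩ <;> rfl
    · intro u hu
      rcases (hmem u).1 hu with ⟨a, rfl⟩ | ⟨a, rfl⟩ <;> simp
    · intro u hu
      rcases (hmem u).1 hu with ⟨a, rfl⟩ | ⟨a, rfl⟩
      · exact Or.inr ⟨Sum.inr (a, 1), hadjP a 0 1 rfl, hadjP a 1 2 rfl⟩
      · exact Or.inr ⟨Sum.inr (a, 1), (hadjP a 1 2 rfl).symm, (hadjP a 0 1 rfl).symm⟩
  have hcard : S.card = 2 * Fintype.card α := by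
    rw [hS, Finset.card_union_of_disjoint]
    · rw [Finset.card_image_of_injective _ (fun a b h => by simpa using h),
        Finset.card_image_of_injective _ (fun a b h => by simpa using h)]
      simp [two_mul]
    · simp [Finset.disjoint_left]
  refine ⟨hsemi, hcard, ?_⟩
  exact Nat.sInf_le ⟨S, hsemi, hcard⟩
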